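/- Shishkin-type decomposition of the exact solution: let u ∈ C^{6,3}([0,1] × [0,T])^M satisfy the layer-adapted bounds |∂^m u_k(x,t)/∂x^m| ≤ C₀(1 + ε^{−m/2} B_ε(x)) for 0 ≤ m ≤ 6, all k, and all (x,t), with β ∈ (0,β*) fixed. Set x* = 4√(ε/β) · ln(1/√ε) and assume x* ≤ 1/4. Then there exist functions v, w : [0,1] × [0,T] → ℝ^M with u = v + w such that: (i) for each t, v(·,t) equals the degree-4 Taylor polynomial of u(·,t) at x* on [0,x*], equals u(·,t) on [x*, 1−x*], and equals the degree-4 Taylor polynomial of u(·,t) at 1−x* on [1−x*,1]; and (ii) there is a constant C, independent of ε, such that for s = 0,…,6, every component k, every t ∈ [0,T], and every x ∈ [0,1] \ {x*, 1−x*}: |∂^s v_k(x,t)/∂x^s| ≤ C(1 + ε^{2−s/2}) and |∂^s w_k(x,t)/∂x^s| ≤ C ε^{−s/2} B_ε(x). -/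

import Mathlib

/-- The boundary-layer function `B_ε(x) = e^{-x√(β/ε)} + e^{-(1-x)√(β/ε)}`. -/
noncomputable def Bfun (β ε x : ℝ) : ℝ :=
  Real.exp (-x * Real.sqrt (β/ε)) + Real.exp (-(1-x) * Real.sqrt (β/ε))

/-- Truncated Taylor-type polynomial. -/
noncomputable def Pn (n : ℕ) (a : ℝ) (c : ℕ → ℝ) (x : ℝ) : ℝ :=
  ∑ ν ∈ Finset.range n, (x - a)^ν / (ν.factorial : ℝ) * c ν

lemma Pn_contDiff (n : ℕ) (a : ℝ) (c : ℕ → ℝ) : ContDiff ℝ 6 (Pn n a c) := by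
  unfold Pn
  refine ContDiff.sum fun ν _ => ?_
  exact (((contDiff_id.sub contDiff_const).pow ν).div_const _).mul contDiff_const

lemma Pn_hasDerivAt (n : ℕ) (a : ℝ) (c : ℕ → ℝ) (x : ℝ) :
    HasDerivAt (Pn n a c) (Pn (n-1) a (fun ν => c (ν+1)) x) x := by
  cases n with
  | zero =>
    have : Pn 0 a c = fun _ => (0:ℝ) := by funext y; simp [Pn]
    rw [this]
    simpa [Pn] using (hasDerivAt_const x (0:ℝ))
  | succ m =>
    have h : ∀ ν : ℕ, HasDerivAt (fun y => (y - a)^ν / (ν.factorial : ℝ) * c ν)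
        ((ν:ℝ) * (x - a)^(ν-1) / (ν.factorial : ℝ) * c ν) x := by
      intro ν
      have h1 : HasDerivAt (fun y : ℝ => y - a) 1 x := (hasDerivAt_id x).sub_const a
      have h2 : HasDerivAt (fun y : ℝ => (y - a)^ν) ((ν:ℝ) * (x - a)^(ν-1)) x := by
        simpa [Pi.pow_def] using (HasDerivAt.pow h1 ν)
      exact (h2.div_const _).mul_const _
    have hsum := HasDerivAt.sum (fun ν (_ : ν ∈ Finset.range (m+1)) => h ν)
    have heq : ∑ ν ∈ Finset.range (m+1), (ν:ℝ) * (x - a)^(ν-1) / (ν.factorial : ℝ) * c ν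
        = Pn m a (fun ν => c (ν+1)) x := by
      rw [Finset.sum_range_succ']
      simp only [Pn]
      have : ∀ i : ℕ, ((i:ℝ)+1) * (x - a)^i / ((i+1).factorial : ℝ) * c (i+1)
          = (x - a)^i / (i.factorial : ℝ) * c (i+1) := by
        intro i
        rw [Nat.factorial_succ]
        have hi : (i.factorial : ℝ) ≠ 0 := Nat.cast_ne_zero.2 i.factorial_ne_zero
        push_cast
        field_simp
      simp only [Nat.cast_add, Nat.cast_one, Nat.add_sub_cancel]
      rw [Finset.sum_congr rfl (fun i _ => by push_cast; rw [this i])]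
      simp
    rw [heq] at hsum
    show HasDerivAt (fun y => Pn (m+1) a c y) _ x
    simpa [Pn, Finset.sum_fn] using hsum

lemma deriv_Pn (n : ℕ) (a : ℝ) (c : ℕ → ℝ) :
    deriv (Pn n a c) = Pn (n-1) a (fun ν => c (ν+1)) := by
  funext x; exact (Pn_hasDerivAt n a c x).deriv

lemma iteratedDeriv_Pn (s n : ℕ) (a : ℝ) (c : ℕ → ℝ) :
    iteratedDeriv s (Pn n a c) = Pn (n - s) a (fun ν => c (ν + s)) := by
  induction s with
  | zero => simp [iteratedDeriv_zero]
  | succ m ih =>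
    rw [iteratedDeriv_succ, ih, deriv_Pn]
    have h1 : n - m - 1 = n - (m+1) := by omega
    rw [h1]
    show Pn (n - (m+1)) a (fun ν => c (ν + 1 + m)) = _
    rw [show (fun ν => c (ν + 1 + m)) = (fun ν => c (ν + (m+1))) from
      funext fun ν => congrArg c (by omega)]

lemma Pn_apply_self (n : ℕ) (hn : 1 ≤ n) (a : ℝ) (c : ℕ → ℝ) : Pn n a c a = c 0 := by
  unfold Pn
  rw [Finset.sum_eq_single 0]
  · simp
  · intro ν _ hν
    simp [zero_pow hν]
  · intro h; exact absurd (Finset.mem_range.2 hn) h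

lemma abs_Pn_le (n : ℕ) (a : ℝ) (c : ℕ → ℝ) (x : ℝ) (h : |x - a| ≤ 1) (K : ℝ)
    (hK : 0 ≤ K) (hc : ∀ ν, ν < n → |c ν| ≤ K) : |Pn n a c x| ≤ n * K := by
  unfold Pn
  calc |∑ ν ∈ Finset.range n, (x - a)^ν / (ν.factorial : ℝ) * c ν|
      ≤ ∑ ν ∈ Finset.range n, |(x - a)^ν / (ν.factorial : ℝ) * c ν| :=
        Finset.abs_sum_le_sum_abs _ _
    _ ≤ ∑ ν ∈ Finset.range n, K := by
        refine Finset.sum_le_sum fun ν hν => ?_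
        rw [abs_mul, abs_div]
        have h1 : |(x - a)^ν| ≤ 1 := by
          rw [abs_pow]; exact pow_le_one₀ (abs_nonneg _) h
        have h2 : (1:ℝ) ≤ |(ν.factorial : ℝ)| := by
          rw [Nat.abs_cast]; exact_mod_cast Nat.one_le_iff_ne_zero.2 ν.factorial_ne_zero
        have h3 : |(x - a)^ν| / |(ν.factorial : ℝ)| ≤ 1 := by
          rw [div_le_one (lt_of_lt_of_le one_pos h2)]; linarith
        calc |(x - a)^ν| / |(ν.factorial : ℝ)| * |c ν| ≤ 1 * |c ν| := by
              have := abs_nonneg (c ν); nlinarith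
          _ = |c ν| := one_mul _
          _ ≤ K := hc ν (Finset.mem_range.1 hν)
    _ = n * K := by rw [Finset.sum_const, Finset.card_range, nsmul_eq_mul]

lemma iteratedDeriv_sub' {n : ℕ} {f g : ℝ → ℝ} (hf : ContDiff ℝ n f) (hg : ContDiff ℝ n g)
    (x : ℝ) :
    iteratedDeriv n (fun z => f z - g z) x = iteratedDeriv n f x - iteratedDeriv n g x := by
  have h1 : iteratedDeriv n (fun z => f z + -(g z)) x
      = iteratedDeriv n f x + iteratedDeriv n (fun z => -(g z)) x := by
    simp only [iteratedDeriv_eq_iteratedFDeriv]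
    rw [iteratedFDeriv_add_apply' hf.contDiffAt hg.neg.contDiffAt]
    simp [ContinuousMultilinearMap.add_apply]
  simp only [sub_eq_add_neg]
  rw [h1, iteratedDeriv_fun_neg]

lemma exp_antideriv (c K : ℝ) (hc : c ≠ 0) (ξ : ℝ) :
    HasDerivAt (fun y => -(K/c) * Real.exp (-(c*y))) (K * Real.exp (-(c*ξ))) ξ := by
  have h1 : HasDerivAt (fun y : ℝ => -(c*y)) (-c) ξ := by
    simpa [Pi.neg_def] using ((hasDerivAt_id ξ).const_mul c).neg
  have h3 := h1.exp.const_mul (-(K/c))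
  refine h3.congr_deriv ?_
  field_simp

lemma exp_antideriv' (c K : ℝ) (hc : c ≠ 0) (ξ : ℝ) :
    HasDerivAt (fun y => (K/c) * Real.exp (c*y)) (K * Real.exp (c*ξ)) ξ := by
  have h1 : HasDerivAt (fun y : ℝ => c*y) c ξ := by
    simpa using ((hasDerivAt_id ξ).const_mul c)
  have h3 := h1.exp.const_mul (K/c)
  refine h3.congr_deriv ?_
  field_simp

lemma step_dec (g g' : ℝ → ℝ) (hg : ∀ x, HasDerivAt g (g' x) x) (hg' : Continuous g')
    (a b c K : ℝ) (hab : a ≤ b) (hc : 0 < c) (hK : 0 ≤ K) (hb : g b = 0)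
    (hbd : ∀ ξ ∈ Set.Icc a b, |g' ξ| ≤ K * Real.exp (-(c*ξ))) :
    |g a| ≤ K / c * Real.exp (-(c*a)) := by
  have hint1 : ∫ ξ in a..b, g' ξ = g b - g a :=
    intervalIntegral.integral_eq_sub_of_hasDerivAt (fun x _ => hg x)
      (hg'.intervalIntegrable a b)
  have hcont : Continuous fun ξ => K * Real.exp (-(c*ξ)) := by continuity
  have hint2 : ∫ ξ in a..b, K * Real.exp (-(c*ξ))
      = -(K/c)*Real.exp (-(c*b)) - (-(K/c)*Real.exp (-(c*a))) :=
    intervalIntegral.integral_eq_sub_of_hasDerivAt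
      (fun ξ _ => exp_antideriv c K hc.ne' ξ) (hcont.intervalIntegrable a b)
  have h4 : |∫ ξ in a..b, g' ξ| ≤ |∫ ξ in a..b, K * Real.exp (-(c*ξ))| := by
    rw [← Real.norm_eq_abs (∫ ξ in a..b, g' ξ)]
    apply intervalIntegral.norm_integral_le_abs_of_norm_le
    · rw [Set.uIoc_of_le hab]
      filter_upwards [MeasureTheory.ae_restrict_mem measurableSet_Ioc] with t ht
      simpa using hbd t ⟨le_of_lt ht.1, ht.2⟩
    · exact hcont.intervalIntegrable a b
  have h5 : |g a| = |∫ ξ in a..b, g' ξ| := by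
    rw [hint1, hb, zero_sub, abs_neg]
  have h6 : Real.exp (-(c*b)) ≤ Real.exp (-(c*a)) := by
    apply Real.exp_le_exp.2; nlinarith
  have h7 : (0:ℝ) < Real.exp (-(c*b)) := Real.exp_pos _
  have h8 : K/c ≥ 0 := div_nonneg hK hc.le
  rw [h5]
  refine h4.trans ?_
  rw [hint2, abs_of_nonneg (by nlinarith)]
  nlinarith

lemma step_inc (g g' : ℝ → ℝ) (hg : ∀ x, HasDerivAt g (g' x) x) (hg' : Continuous g')
    (a b c K : ℝ) (hab : a ≤ b) (hc : 0 < c) (hK : 0 ≤ K) (ha : g a = 0)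
    (hbd : ∀ ξ ∈ Set.Icc a b, |g' ξ| ≤ K * Real.exp (c*ξ)) :
    |g b| ≤ K / c * Real.exp (c*b) := by
  have hint1 : ∫ ξ in a..b, g' ξ = g b - g a :=
    intervalIntegral.integral_eq_sub_of_hasDerivAt (fun x _ => hg x)
      (hg'.intervalIntegrable a b)
  have hcont : Continuous fun ξ => K * Real.exp (c*ξ) := by continuity
  have hint2 : ∫ ξ in a..b, K * Real.exp (c*ξ)
      = (K/c)*Real.exp (c*b) - (K/c)*Real.exp (c*a) :=
    intervalIntegral.integral_eq_sub_of_hasDerivAt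
      (fun ξ _ => exp_antideriv' c K hc.ne' ξ) (hcont.intervalIntegrable a b)
  have h4 : |∫ ξ in a..b, g' ξ| ≤ |∫ ξ in a..b, K * Real.exp (c*ξ)| := by
    rw [← Real.norm_eq_abs (∫ ξ in a..b, g' ξ)]
    apply intervalIntegral.norm_integral_le_abs_of_norm_le
    · rw [Set.uIoc_of_le hab]
      filter_upwards [MeasureTheory.ae_restrict_mem measurableSet_Ioc] with t ht
      simpa using hbd t ⟨le_of_lt ht.1, ht.2⟩
    · exact hcont.intervalIntegrable a b
  have h5 : |g b| = |∫ ξ in a..b, g' ξ| := by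
    rw [hint1, ha, sub_zero]
  have h6 : Real.exp (c*a) ≤ Real.exp (c*b) := by
    apply Real.exp_le_exp.2; nlinarith
  have h7 : (0:ℝ) < Real.exp (c*a) := Real.exp_pos _
  have h8 : K/c ≥ 0 := div_nonneg hK hc.le
  rw [h5]
  refine h4.trans ?_
  rw [hint2, abs_of_nonneg (by nlinarith)]
  nlinarith

lemma hasDerivAt_iteratedDeriv {f : ℝ → ℝ} (hf : ContDiff ℝ 6 f) (m : ℕ) (hm : m < 6) (z : ℝ) :
    HasDerivAt (iteratedDeriv m f) (iteratedDeriv (m+1) f z) z := by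
  have hd : DifferentiableAt ℝ (iteratedDeriv m f) z := by
    have := hf.differentiable_iteratedDeriv m (by exact_mod_cast hm)
    exact this.differentiableAt
  have h1 : iteratedDeriv (m+1) f z = deriv (iteratedDeriv m f) z := by
    rw [iteratedDeriv_succ]
  rw [h1]
  exact hd.hasDerivAt

lemma layer_iter_dec (f : ℝ → ℝ) (hf : ContDiff ℝ 6 f) (c A xs : ℝ) (hc : 0 < c) (hA : 0 ≤ A)
    (hxs : 0 ≤ xs)
    (hz : ∀ m : ℕ, m ≤ 3 → iteratedDeriv m f xs = 0)
    (hbase : ∀ y ∈ Set.Icc 0 xs, |iteratedDeriv 4 f y| ≤ A * Real.exp (-(c*y))) :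
    ∀ j : ℕ, j ≤ 4 → ∀ y ∈ Set.Icc 0 xs,
      |iteratedDeriv (4-j) f y| ≤ A * (1/c)^j * Real.exp (-(c*y)) := by
  intro j
  induction j with
  | zero => intro _ y hy; simpa using hbase y hy
  | succ i ih =>
    intro hij y hy
    have hi3 : i ≤ 3 := by omega
    have h45 : 4-(i+1)+1 = 4-i := by omega
    have hstep := step_dec (iteratedDeriv (4-(i+1)) f) (iteratedDeriv (4-i) f)
      (fun z => by
        have := hasDerivAt_iteratedDeriv hf (4-(i+1)) (by omega) z
        rwa [h45] at this)
      (hf.continuous_iteratedDeriv (4-i) (by exact_mod_cast (by omega : 4-i ≤ 6)))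
      y xs c (A * (1/c)^i) hy.2 hc (by positivity)
      (hz (4-(i+1)) (by omega))
      (fun ξ hξ => ih (by omega) ξ ⟨le_trans hy.1 hξ.1, hξ.2⟩)
    have heq : A * (1/c)^i / c = A * (1/c)^(i+1) := by
      ring
    rwa [heq] at hstep

lemma layer_iter_inc (f : ℝ → ℝ) (hf : ContDiff ℝ 6 f) (c A b : ℝ) (hc : 0 < c) (hA : 0 ≤ A)
    (hb : b ≤ 1)
    (hz : ∀ m : ℕ, m ≤ 3 → iteratedDeriv m f b = 0)
    (hbase : ∀ y ∈ Set.Icc b 1, |iteratedDeriv 4 f y| ≤ A * Real.exp (-(c*(1-y)))) :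
    ∀ j : ℕ, j ≤ 4 → ∀ y ∈ Set.Icc b 1,
      |iteratedDeriv (4-j) f y| ≤ A * (1/c)^j * Real.exp (-(c*(1-y))) := by
  have hsplit : ∀ K ξ : ℝ, K * Real.exp (-(c*(1-ξ))) = (K * Real.exp (-c)) * Real.exp (c*ξ) := by
    intro K ξ
    rw [mul_assoc, ← Real.exp_add]
    congr 2
    ring
  intro j
  induction j with
  | zero => intro _ y hy; simpa using hbase y hy
  | succ i ih =>
    intro hij y hy
    have hi3 : i ≤ 3 := by omega
    have h45 : 4-(i+1)+1 = 4-i := by omega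
    have hstep := step_inc (iteratedDeriv (4-(i+1)) f) (iteratedDeriv (4-i) f)
      (fun z => by
        have := hasDerivAt_iteratedDeriv hf (4-(i+1)) (by omega) z
        rwa [h45] at this)
      (hf.continuous_iteratedDeriv (4-i) (by exact_mod_cast (by omega : 4-i ≤ 6)))
      b y c (A * (1/c)^i * Real.exp (-c)) hy.1 hc (by positivity)
      (hz (4-(i+1)) (by omega))
      (fun ξ hξ => by
        rw [← hsplit]
        exact ih (by omega) ξ ⟨hξ.1, le_trans hξ.2 hy.2⟩)
    have heq : A * (1/c)^i * Real.exp (-c) / c * Real.exp (c*y)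
        = A * (1/c)^(i+1) * Real.exp (-(c*(1-y))) := by
      rw [hsplit (A * (1/c)^(i+1)) y]
      ring
    rwa [heq] at hstep

lemma iteratedDeriv_zero_fun (n : ℕ) : iteratedDeriv n (fun _ : ℝ => (0:ℝ)) = fun _ => 0 := by
  induction n with
  | zero => funext y; simp [iteratedDeriv_zero]
  | succ m ih => rw [iteratedDeriv_succ, ih]; funext y; simp

lemma inv_sqrt_pow_le (β : ℝ) (hβ : 0 < β) (m : ℕ) (hm : m ≤ 4) :
    ((Real.sqrt β)⁻¹)^m ≤ (1 + 1/β)^2 := by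
  set r := (Real.sqrt β)⁻¹ with hr
  have hr0 : 0 ≤ r := inv_nonneg.2 (Real.sqrt_nonneg β)
  have hr2 : r^2 = 1/β := by
    rw [hr, ← one_div, div_pow, one_pow, Real.sq_sqrt hβ.le]
  rcases le_total r 1 with h | h
  · have h1 : r^m ≤ 1 := pow_le_one₀ hr0 h
    have h2 : (1:ℝ) ≤ (1 + 1/β)^2 := by
      have : (0:ℝ) ≤ 1/β := by positivity
      nlinarith
    linarith
  · have h1 : r^m ≤ r^4 := pow_le_pow_right₀ h hm
    have h2 : r^4 = (1/β)^2 := by rw [show r^4 = (r^2)^2 from by ring, hr2]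
    have h3 : (1/β)^2 ≤ (1+1/β)^2 := by
      have : (0:ℝ) ≤ 1/β := by positivity
      nlinarith
    linarith

lemma sqrt_pow_div_eq (ε : ℝ) (hε : 0 < ε) (s : ℕ) (hs : s ≤ 4) :
    Real.sqrt ε ^ (4-s) / ε^2 = ε ^ (-(s:ℝ)/2) := by
  rw [Real.sqrt_eq_rpow, ← Real.rpow_natCast (ε ^ ((1:ℝ)/2)) (4-s), ← Real.rpow_mul hε.le,
    show (ε^2 : ℝ) = ε ^ ((2:ℕ):ℝ) from (Real.rpow_natCast ε 2).symm, ← Real.rpow_sub hε]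
  congr 1
  rw [Nat.cast_sub hs]
  push_cast
  ring

lemma rpow_shift (ε : ℝ) (hε : 0 < ε) (s : ℕ) :
    ε ^ (-(s:ℝ)/2) * ε^2 = ε ^ ((2:ℝ) - (s:ℝ)/2) := by
  rw [show (ε^2 : ℝ) = ε ^ ((2:ℕ):ℝ) from (Real.rpow_natCast ε 2).symm, ← Real.rpow_add hε]
  congr 1
  push_cast
  ring

lemma one_le_eps_term (ε : ℝ) (hε : 0 < ε) (hε1 : ε ≤ 1) (s : ℕ) (hs : 4 ≤ s) (B : ℝ)
    (hB : ε^2 ≤ B) : 1 ≤ ε ^ (-(s:ℝ)/2) * B := by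
  have h1 : ε ^ ((-2):ℝ) ≤ ε ^ (-(s:ℝ)/2) := by
    apply Real.rpow_le_rpow_of_exponent_ge hε hε1
    have : (4:ℝ) ≤ s := by exact_mod_cast hs
    linarith
  have h2 : ε ^ ((-2):ℝ) * ε^2 = 1 := by
    rw [show ((-2):ℝ) = -((2:ℕ):ℝ) by push_cast; ring, Real.rpow_neg hε.le, Real.rpow_natCast]
    field_simp
  have hB0 : (0:ℝ) < ε^2 := by positivity
  calc (1:ℝ) = ε ^ ((-2):ℝ) * ε^2 := h2.symm
    _ ≤ ε ^ (-(s:ℝ)/2) * B := mul_le_mul h1 hB hB0.le (Real.rpow_nonneg hε.le _)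

noncomputable def Vfun {M : ℕ} (xs : ℝ) (u : ℝ → ℝ → Fin M → ℝ) (x t : ℝ) (k : Fin M) : ℝ :=
  if x < xs then Pn 5 xs (fun ν => iteratedDeriv ν (fun z => u z t k) xs) x
  else if x ≤ 1 - xs then u x t k
  else Pn 5 (1-xs) (fun ν => iteratedDeriv ν (fun z => u z t k) (1-xs)) x

set_option maxHeartbeats 4000000 in
/-- Shishkin-type decomposition `u = v + w` of the exact solution into a regular
part `v` (Taylor polynomials of degree 4 near the boundary, `u` itself in the
interior) and a layer part `w`, with ε-uniform derivative bounds. -/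
theorem stmt_4
    (M : ℕ) (hM : 2 ≤ M)
    (βs β : ℝ) (hβ : β ∈ Set.Ioo (0:ℝ) βs)
    (C₀ : ℝ) (hC₀ : 0 < C₀) :
    ∃ C : ℝ, ∀ (T : ℝ), 0 < T → ∀ ε ∈ Set.Ioc (0:ℝ) 1,
    ∀ u : ℝ → ℝ → Fin M → ℝ,
      (∀ k t, ContDiff ℝ 6 (fun x => u x t k)) →
      (∀ k x (i : ℕ), i ≤ 6 →
        ContDiff ℝ 3 (fun t => iteratedDeriv i (fun z => u z t k) x)) →
      (∀ m : ℕ, m ≤ 6 → ∀ k, ∀ x ∈ Set.Icc (0:ℝ) 1, ∀ t ∈ Set.Icc (0:ℝ) T,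
        |iteratedDeriv m (fun z => u z t k) x|
          ≤ C₀ * (1 + ε ^ (-(m:ℝ)/2) * Bfun β ε x)) →
      4 * Real.sqrt (ε/β) * Real.log (1/Real.sqrt ε) ≤ 1/4 →
      ∃ v w : ℝ → ℝ → Fin M → ℝ,
        (∀ x t k, u x t k = v x t k + w x t k) ∧
        (∀ t ∈ Set.Icc (0:ℝ) T, ∀ k,
          ∀ x ∈ Set.Icc (0:ℝ) (4 * Real.sqrt (ε/β) * Real.log (1/Real.sqrt ε)),
            v x t k = ∑ ν ∈ Finset.range 5,
              (x - 4 * Real.sqrt (ε/β) * Real.log (1/Real.sqrt ε))^ν / (ν.factorial : ℝ)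
                * iteratedDeriv ν (fun z => u z t k)
                    (4 * Real.sqrt (ε/β) * Real.log (1/Real.sqrt ε))) ∧
        (∀ t ∈ Set.Icc (0:ℝ) T, ∀ k,
          ∀ x ∈ Set.Icc (4 * Real.sqrt (ε/β) * Real.log (1/Real.sqrt ε))
              (1 - 4 * Real.sqrt (ε/β) * Real.log (1/Real.sqrt ε)),
            v x t k = u x t k) ∧
        (∀ t ∈ Set.Icc (0:ℝ) T, ∀ k,
          ∀ x ∈ Set.Icc (1 - 4 * Real.sqrt (ε/β) * Real.log (1/Real.sqrt ε)) (1:ℝ),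
            v x t k = ∑ ν ∈ Finset.range 5,
              (x - (1 - 4 * Real.sqrt (ε/β) * Real.log (1/Real.sqrt ε)))^ν / (ν.factorial : ℝ)
                * iteratedDeriv ν (fun z => u z t k)
                    (1 - 4 * Real.sqrt (ε/β) * Real.log (1/Real.sqrt ε))) ∧
        (∀ s : ℕ, s ≤ 6 → ∀ k, ∀ t ∈ Set.Icc (0:ℝ) T, ∀ x ∈ Set.Icc (0:ℝ) 1,
          x ≠ 4 * Real.sqrt (ε/β) * Real.log (1/Real.sqrt ε) →
          x ≠ 1 - 4 * Real.sqrt (ε/β) * Real.log (1/Real.sqrt ε) →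
          |iteratedDeriv s (fun z => v z t k) x| ≤ C * (1 + ε ^ ((2:ℝ) - (s:ℝ)/2)) ∧
          |iteratedDeriv s (fun z => w z t k) x| ≤ C * ε ^ (-(s:ℝ)/2) * Bfun β ε x) := by
  obtain ⟨hβ0, -⟩ := hβ
  have hq : (1:ℝ) ≤ (1+1/β)^2 := by
    have h01 : (0:ℝ) < 1/β := by positivity
    nlinarith
  refine ⟨20 * C₀ * (1 + 1/β)^2, ?_⟩
  intro T hT ε hεm u hu _hut hbd hxs14
  obtain ⟨hε0, hε1⟩ := hεm
  set xs := 4 * Real.sqrt (ε/β) * Real.log (1/Real.sqrt ε) with hxs_def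
  have hsε0 : 0 < Real.sqrt ε := Real.sqrt_pos.2 hε0
  have hsε1 : Real.sqrt ε ≤ 1 := by
    rw [show (1:ℝ) = Real.sqrt 1 from Real.sqrt_one.symm]
    exact Real.sqrt_le_sqrt hε1
  have hlog0 : 0 ≤ Real.log (1/Real.sqrt ε) := by
    apply Real.log_nonneg
    rw [le_div_iff₀ hsε0, one_mul]
    exact hsε1
  have hxs0 : 0 ≤ xs := by
    rw [hxs_def]
    exact mul_nonneg (mul_nonneg (by norm_num) (Real.sqrt_nonneg _)) hlog0
  set c := Real.sqrt (β/ε) with hc_def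
  have hc0 : 0 < c := Real.sqrt_pos.2 (div_pos hβ0 hε0)
  have hprod : c * Real.sqrt (ε/β) = 1 := by
    rw [hc_def, ← Real.sqrt_mul (by positivity : (0:ℝ) ≤ β/ε),
      show β/ε * (ε/β) = 1 from by field_simp]
    exact Real.sqrt_one
  have hlogeq : Real.log (1/Real.sqrt ε) = -(Real.log ε / 2) := by
    rw [one_div, Real.log_inv, Real.log_sqrt hε0.le]
  have hcxs : c * xs = -(2 * Real.log ε) := by
    calc c * xs = (c * Real.sqrt (ε/β)) * (4 * Real.log (1/Real.sqrt ε)) := by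
          rw [hxs_def]; ring
      _ = -(2 * Real.log ε) := by rw [hprod, hlogeq]; ring
  have hE : Real.exp (-(c*xs)) = ε^2 := by
    rw [hcxs, neg_neg, show (2:ℝ) * Real.log ε = Real.log ε + Real.log ε from by ring,
      Real.exp_add, Real.exp_log hε0]
    ring
  have hB : ∀ y : ℝ, Bfun β ε y = Real.exp (-(c*y)) + Real.exp (-(c*(1-y))) := by
    intro y
    unfold Bfun
    rw [show -y * Real.sqrt (β/ε) = -(c*y) from by rw [hc_def]; ring,
        show -(1-y) * Real.sqrt (β/ε) = -(c*(1-y)) from by rw [hc_def]; ring]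
  have hBpos : ∀ y : ℝ, 0 < Bfun β ε y := fun y => by
    rw [hB]; positivity
  have hBleft : ∀ y : ℝ, Real.exp (-(c*y)) ≤ Bfun β ε y := fun y => by
    rw [hB]; nlinarith [Real.exp_pos (-(c*(1-y)))]
  have hBright : ∀ y : ℝ, Real.exp (-(c*(1-y))) ≤ Bfun β ε y := fun y => by
    rw [hB]; nlinarith [Real.exp_pos (-(c*y))]
  have hBmid : ∀ y : ℝ, xs ≤ y → y ≤ 1 - xs → Bfun β ε y ≤ 2 * ε^2 := by
    intro y h1 h2
    rw [hB]
    have e1 : Real.exp (-(c*y)) ≤ ε^2 := by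
      rw [← hE]; apply Real.exp_le_exp.2; nlinarith
    have e2 : Real.exp (-(c*(1-y))) ≤ ε^2 := by
      rw [← hE]; apply Real.exp_le_exp.2; nlinarith
    linarith
  have hb34 : (3:ℝ)/4 ≤ 1 - xs := by linarith
  have hCpos : (0:ℝ) < 20 * C₀ * (1 + 1/β)^2 := by nlinarith
  -- coefficient bound (used for both endpoints)
  have hcoefb : ∀ (t : ℝ), t ∈ Set.Icc (0:ℝ) T → ∀ (k : Fin M) (a : ℝ), 0 ≤ a → a ≤ 1 →
      Bfun β ε a ≤ 2 * ε^2 → ∀ m : ℕ, m ≤ 4 →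
      |iteratedDeriv m (fun z => u z t k) a| ≤ 3*C₀ := by
    intro t ht k a ha0 ha1 hBa m hm4
    have h1 := hbd m (by omega) k a ⟨ha0, ha1⟩ t ht
    have h2 : ε ^ (-((m:ℕ):ℝ)/2) * Bfun β ε a ≤ 2 * ε ^ ((2:ℝ) - ((m:ℕ):ℝ)/2) := by
      calc ε ^ (-((m:ℕ):ℝ)/2) * Bfun β ε a ≤ ε ^ (-((m:ℕ):ℝ)/2) * (2*ε^2) :=
            mul_le_mul_of_nonneg_left hBa (Real.rpow_nonneg hε0.le _)
        _ = 2 * (ε ^ (-((m:ℕ):ℝ)/2) * ε^2) := by ring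
        _ = 2 * ε ^ ((2:ℝ) - ((m:ℕ):ℝ)/2) := by rw [rpow_shift ε hε0]
    have h3 : ε ^ ((2:ℝ) - ((m:ℕ):ℝ)/2) ≤ 1 := by
      apply Real.rpow_le_one hε0.le hε1
      have : ((m:ℕ):ℝ) ≤ 4 := by exact_mod_cast hm4
      linarith
    have h4 : (0:ℝ) ≤ ε ^ (-((m:ℕ):ℝ)/2) * Bfun β ε a :=
      mul_nonneg (Real.rpow_nonneg hε0.le _) (hBpos a).le
    nlinarith
  refine ⟨Vfun xs u, fun x t k => u x t k - Vfun xs u x t k, ?_, ?_, ?_, ?_, ?_⟩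
  · intro x t k; ring
  · -- left Taylor identity
    intro t ht k x hx
    rcases lt_or_eq_of_le hx.2 with h | h
    · unfold Vfun
      rw [if_pos h]
      unfold Pn
      rfl
    · have hveq : Vfun xs u xs t k = u xs t k := by
        unfold Vfun
        rw [if_neg (lt_irrefl xs), if_pos (by linarith : xs ≤ 1-xs)]
      have hsum := Pn_apply_self 5 (by norm_num) xs
        (fun ν => iteratedDeriv ν (fun z => u z t k) xs)
      unfold Pn at hsum
      rw [h, hveq, hsum]
      rw [iteratedDeriv_zero]
  · -- middle identity
    intro t ht k x hx
    unfold Vfun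
    rw [if_neg (not_lt.2 hx.1), if_pos hx.2]
  · -- right Taylor identity
    intro t ht k x hx
    rcases lt_or_eq_of_le hx.1 with h | h
    · unfold Vfun
      rw [if_neg (by linarith : ¬ x < xs), if_neg (by linarith : ¬ x ≤ 1 - xs)]
      unfold Pn
      rfl
    · have hveq : Vfun xs u (1-xs) t k = u (1-xs) t k := by
        unfold Vfun
        rw [if_neg (by linarith : ¬ (1-xs) < xs), if_pos le_rfl]
      have hsum := Pn_apply_self 5 (by norm_num) (1-xs)
        (fun ν => iteratedDeriv ν (fun z => u z t k) (1-xs))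
      unfold Pn at hsum
      rw [← h, hveq, hsum]
      rw [iteratedDeriv_zero]
  · -- the derivative bounds
    intro s hs k t ht x hx hne1 hne2
    obtain ⟨hx0, hx1⟩ := hx
    have hrpnn : (0:ℝ) ≤ ε ^ (-(s:ℝ)/2) := Real.rpow_nonneg hε0.le _
    have hrp2nn : (0:ℝ) ≤ ε ^ ((2:ℝ) - (s:ℝ)/2) := Real.rpow_nonneg hε0.le _
    rcases lt_trichotomy x xs with hA | hA | hA
    · -- LEFT REGION
      have hvP : (fun z => Vfun xs u z t k) =ᶠ[nhds x]
          (fun z => Pn 5 xs (fun ν => iteratedDeriv ν (fun z => u z t k) xs) z) := by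
        filter_upwards [Iio_mem_nhds hA] with z hz
        unfold Vfun
        rw [if_pos (Set.mem_Iio.mp hz)]
      have hwP : (fun z => u z t k - Vfun xs u z t k) =ᶠ[nhds x]
          (fun z => u z t k - Pn 5 xs (fun ν => iteratedDeriv ν (fun z => u z t k) xs) z) := by
        filter_upwards [Iio_mem_nhds hA] with z hz
        unfold Vfun
        rw [if_pos (Set.mem_Iio.mp hz)]
      have hBxs2 : Bfun β ε xs ≤ 2*ε^2 := hBmid xs le_rfl (by linarith)
      constructor
      · -- v bound (left)
        rw [hvP.iteratedDeriv_eq s, iteratedDeriv_Pn]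
        have habs : |x - xs| ≤ 1 := by rw [abs_le]; constructor <;> linarith
        have hcoef : ∀ ν, ν < 5 - s →
            |(fun ν => iteratedDeriv ν (fun z => u z t k) xs) (ν + s)| ≤ 3*C₀ := by
          intro ν hν
          exact hcoefb t ht k xs hxs0 (by linarith) hBxs2 (ν+s) (by omega)
        have hP := abs_Pn_le (5-s) xs _ x habs (3*C₀) (by positivity) hcoef
        refine hP.trans ?_
        have h5s : ((5-s:ℕ):ℝ) ≤ 5 := by exact_mod_cast (by omega : (5-s:ℕ) ≤ 5)
        have hkey : (1:ℝ) ≤ (1+1/β)^2 * (1 + ε ^ ((2:ℝ) - (s:ℝ)/2)) := by nlinarith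
        have hnn : (0:ℝ) ≤ ((5-s:ℕ):ℝ) := Nat.cast_nonneg _
        nlinarith
      · -- w bound (left)
        rw [hwP.iteratedDeriv_eq s]
        have hP6 : ContDiff ℝ 6 (Pn 5 xs (fun ν => iteratedDeriv ν (fun z => u z t k) xs)) :=
          Pn_contDiff _ _ _
        have hf6 : ContDiff ℝ 6 (fun z => u z t k
            - Pn 5 xs (fun ν => iteratedDeriv ν (fun z => u z t k) xs) z) :=
          (hu k t).sub hP6
        have hsub : ∀ m : ℕ, m ≤ 6 → ∀ y : ℝ,
            iteratedDeriv m (fun z => u z t k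
              - Pn 5 xs (fun ν => iteratedDeriv ν (fun z => u z t k) xs) z) y
            = iteratedDeriv m (fun z => u z t k) y
              - iteratedDeriv m (Pn 5 xs (fun ν => iteratedDeriv ν (fun z => u z t k) xs)) y := by
          intro m hm y
          exact iteratedDeriv_sub' ((hu k t).of_le (by exact_mod_cast hm))
            (hP6.of_le (by exact_mod_cast hm)) y
        by_cases hs4 : s ≤ 4
        · have hzero : ∀ m : ℕ, m ≤ 3 → iteratedDeriv m (fun z => u z t k
              - Pn 5 xs (fun ν => iteratedDeriv ν (fun z => u z t k) xs) z) xs = 0 := by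
            intro m hm
            rw [hsub m (by omega), iteratedDeriv_Pn, Pn_apply_self _ (by omega)]
            simp
          have hbase : ∀ y ∈ Set.Icc 0 xs, |iteratedDeriv 4 (fun z => u z t k
              - Pn 5 xs (fun ν => iteratedDeriv ν (fun z => u z t k) xs) z) y|
              ≤ (6*C₀*(ε^2)⁻¹) * Real.exp (-(c*y)) := by
            intro y hy
            rw [hsub 4 (by norm_num), iteratedDeriv_Pn]
            have hP1 : Pn (5-4) xs
                (fun ν => (fun ν' => iteratedDeriv ν' (fun z => u z t k) xs) (ν + 4)) y
                = iteratedDeriv 4 (fun z => u z t k) xs := by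
              show Pn 1 _ _ _ = _
              unfold Pn
              rw [Finset.sum_range_one]
              norm_num
            rw [hP1]
            have hy1 : y ≤ 1 := by linarith [hy.2]
            have hu4y := hbd 4 (by norm_num) k y ⟨hy.1, hy1⟩ t ht
            have hu4xs := hcoefb t ht k xs hxs0 (by linarith) hBxs2 4 (by norm_num)
            have h4e : ε ^ (-((4:ℕ):ℝ)/2) = (ε^2)⁻¹ := by
              rw [show (-((4:ℕ):ℝ)/2) = -((2:ℕ):ℝ) from by push_cast; ring,
                Real.rpow_neg hε0.le, Real.rpow_natCast]
            rw [h4e] at hu4y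
            have hε2pos : (0:ℝ) < ε^2 := by positivity
            have hinv : (0:ℝ) < (ε^2)⁻¹ := by positivity
            have hεexp_y : ε^2 ≤ Real.exp (-(c*y)) := by
              rw [← hE]; exact Real.exp_le_exp.2 (by nlinarith [hy.2])
            have hBy : Bfun β ε y ≤ 2 * Real.exp (-(c*y)) := by
              rw [hB]
              have : Real.exp (-(c*(1-y))) ≤ Real.exp (-(c*y)) := by
                apply Real.exp_le_exp.2
                nlinarith [hy.1, hy.2]
              linarith
            have h1y : 1 ≤ (ε^2)⁻¹ * Real.exp (-(c*y)) := by
              rw [show (1:ℝ) = (ε^2)⁻¹ * ε^2 from by field_simp]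
              exact mul_le_mul_of_nonneg_left hεexp_y hinv.le
            have h2y : (ε^2)⁻¹ * Bfun β ε y ≤ (ε^2)⁻¹ * (2*Real.exp (-(c*y))) :=
              mul_le_mul_of_nonneg_left hBy hinv.le
            have htri : |iteratedDeriv 4 (fun z => u z t k) y
                - iteratedDeriv 4 (fun z => u z t k) xs|
                ≤ |iteratedDeriv 4 (fun z => u z t k) y|
                  + |iteratedDeriv 4 (fun z => u z t k) xs| := abs_sub _ _
            nlinarith [hu4y, hu4xs, htri, mul_le_mul_of_nonneg_left h2y hC₀.le,
              mul_le_mul_of_nonneg_left h1y hC₀.le]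
          have hiter := layer_iter_dec _ hf6 c (6*C₀*(ε^2)⁻¹) xs hc0 (by positivity) hxs0
            hzero hbase
          have hfinal := hiter (4-s) (by omega) x ⟨hx0, hA.le⟩
          rw [show 4-(4-s) = s from by omega] at hfinal
          refine hfinal.trans ?_
          have h1c : (1:ℝ)/c = Real.sqrt ε * (Real.sqrt β)⁻¹ := by
            calc (1:ℝ)/c = (Real.sqrt β / Real.sqrt ε)⁻¹ := by
                  rw [hc_def, Real.sqrt_div hβ0.le, one_div]
              _ = Real.sqrt ε / Real.sqrt β := inv_div _ _
              _ = Real.sqrt ε * (Real.sqrt β)⁻¹ := div_eq_mul_inv _ _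
          have hconst : (6*C₀*(ε^2)⁻¹) * ((1:ℝ)/c)^(4-s)
              = (6*C₀*((Real.sqrt β)⁻¹)^(4-s)) * (Real.sqrt ε^(4-s)/ε^2) := by
            rw [h1c]; ring
          rw [hconst, sqrt_pow_div_eq ε hε0 s hs4]
          have hr := inv_sqrt_pow_le β hβ0 (4-s) (by omega)
          have e1 : Real.exp (-(c*x)) ≤ Bfun β ε x := hBleft x
          have hrpow0 : (0:ℝ) ≤ ((Real.sqrt β)⁻¹)^(4-s) :=
            pow_nonneg (inv_nonneg.2 (Real.sqrt_nonneg β)) _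
          apply mul_le_mul (mul_le_mul_of_nonneg_right
            (by nlinarith [sq_nonneg (1+1/β)]) hrpnn) e1 (Real.exp_pos _).le
            (mul_nonneg hCpos.le hrpnn)
        · -- s ≥ 5 (left)
          push_neg at hs4
          rw [hsub s hs x, iteratedDeriv_Pn, show 5 - s = 0 from by omega]
          have hP0 : Pn 0 xs
              (fun ν => (fun ν' => iteratedDeriv ν' (fun z => u z t k) xs) (ν + s)) x = 0 := by
            unfold Pn; simp
          rw [hP0, sub_zero]
          have husx := hbd s (by omega) k x ⟨hx0, hx1⟩ t ht
          have hge : ε^2 ≤ Bfun β ε x := by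
            refine le_trans ?_ (hBleft x)
            rw [← hE]
            exact Real.exp_le_exp.2 (by nlinarith)
          have h1 := one_le_eps_term ε hε0 hε1 s (by omega) _ hge
          refine husx.trans ?_
          have hG0 : (0:ℝ) ≤ ε ^ (-(s:ℝ)/2) * Bfun β ε x := le_trans zero_le_one h1
          nlinarith [mul_nonneg (mul_nonneg hC₀.le (sub_nonneg.2 hq)) hG0,
            mul_nonneg hC₀.le (sub_nonneg.2 h1)]
    · exact absurd hA hne1
    · rcases lt_trichotomy x (1 - xs) with hBm | hBm | hBm
      · -- MIDDLE REGION
        have hvu : (fun z => Vfun xs u z t k) =ᶠ[nhds x] (fun z => u z t k) := by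
          filter_upwards [Ioo_mem_nhds hA hBm] with z hz
          unfold Vfun
          rw [if_neg (not_lt.2 hz.1.le), if_pos hz.2.le]
        have hw0 : (fun z => u z t k - Vfun xs u z t k) =ᶠ[nhds x] (fun _ => (0:ℝ)) := by
          filter_upwards [Ioo_mem_nhds hA hBm] with z hz
          unfold Vfun
          rw [if_neg (not_lt.2 hz.1.le), if_pos hz.2.le]
          ring
        constructor
        · rw [hvu.iteratedDeriv_eq s]
          have h1 := hbd s hs k x ⟨hx0, hx1⟩ t ht
          refine h1.trans ?_
          have hBx := hBmid x hA.le hBm.le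
          have h2 : ε ^ (-(s:ℝ)/2) * Bfun β ε x ≤ 2 * ε ^ ((2:ℝ) - (s:ℝ)/2) := by
            calc ε ^ (-(s:ℝ)/2) * Bfun β ε x ≤ ε ^ (-(s:ℝ)/2) * (2*ε^2) :=
                  mul_le_mul_of_nonneg_left hBx hrpnn
              _ = 2 * (ε ^ (-(s:ℝ)/2) * ε^2) := by ring
              _ = 2 * ε ^ ((2:ℝ) - (s:ℝ)/2) := by rw [rpow_shift ε hε0]
          nlinarith [mul_nonneg (mul_nonneg hC₀.le (sub_nonneg.2 hq))
            (by positivity : (0:ℝ) ≤ 1 + ε ^ ((2:ℝ)-(s:ℝ)/2)),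
            mul_nonneg hrpnn (hBpos x).le]
        · rw [hw0.iteratedDeriv_eq s, iteratedDeriv_zero_fun]
          simp only [abs_zero]
          have := hBpos x
          nlinarith [mul_pos (mul_pos hCpos (lt_of_lt_of_le zero_lt_one
            (Real.one_le_rpow_of_pos_of_le_one_of_nonpos hε0 hε1
              (by have := Nat.cast_nonneg (α := ℝ) s; linarith : -(s:ℝ)/2 ≤ 0)))) (hBpos x)]
      · exact absurd hBm hne2
      · -- RIGHT REGION
        have hxgt : 1 - xs < x := hBm
        have hvQ : (fun z => Vfun xs u z t k) =ᶠ[nhds x]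
            (fun z => Pn 5 (1-xs) (fun ν => iteratedDeriv ν (fun z => u z t k) (1-xs)) z) := by
          filter_upwards [Ioi_mem_nhds hxgt] with z hz
          have hz' : 1 - xs < z := Set.mem_Ioi.mp hz
          unfold Vfun
          rw [if_neg (by linarith : ¬ z < xs), if_neg (by linarith : ¬ z ≤ 1 - xs)]
        have hwQ : (fun z => u z t k - Vfun xs u z t k) =ᶠ[nhds x]
            (fun z => u z t k
              - Pn 5 (1-xs) (fun ν => iteratedDeriv ν (fun z => u z t k) (1-xs)) z) := by
          filter_upwards [Ioi_mem_nhds hxgt] with z hz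
          have hz' : 1 - xs < z := Set.mem_Ioi.mp hz
          unfold Vfun
          rw [if_neg (by linarith : ¬ z < xs), if_neg (by linarith : ¬ z ≤ 1 - xs)]
        have hBb2 : Bfun β ε (1-xs) ≤ 2*ε^2 := hBmid (1-xs) (by linarith) le_rfl
        constructor
        · -- v bound (right)
          rw [hvQ.iteratedDeriv_eq s, iteratedDeriv_Pn]
          have habs : |x - (1-xs)| ≤ 1 := by rw [abs_le]; constructor <;> linarith
          have hcoef : ∀ ν, ν < 5 - s →
              |(fun ν => iteratedDeriv ν (fun z => u z t k) (1-xs)) (ν + s)| ≤ 3*C₀ := by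
            intro ν hν
            exact hcoefb t ht k (1-xs) (by linarith) (by linarith) hBb2 (ν+s) (by omega)
          have hP := abs_Pn_le (5-s) (1-xs) _ x habs (3*C₀) (by positivity) hcoef
          refine hP.trans ?_
          have h5s : ((5-s:ℕ):ℝ) ≤ 5 := by exact_mod_cast (by omega : (5-s:ℕ) ≤ 5)
          have hkey : (1:ℝ) ≤ (1+1/β)^2 * (1 + ε ^ ((2:ℝ) - (s:ℝ)/2)) := by nlinarith
          have hnn : (0:ℝ) ≤ ((5-s:ℕ):ℝ) := Nat.cast_nonneg _
          nlinarith
        · -- w bound (right)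
          rw [hwQ.iteratedDeriv_eq s]
          have hP6 : ContDiff ℝ 6
              (Pn 5 (1-xs) (fun ν => iteratedDeriv ν (fun z => u z t k) (1-xs))) :=
            Pn_contDiff _ _ _
          have hf6 : ContDiff ℝ 6 (fun z => u z t k
              - Pn 5 (1-xs) (fun ν => iteratedDeriv ν (fun z => u z t k) (1-xs)) z) :=
            (hu k t).sub hP6
          have hsub : ∀ m : ℕ, m ≤ 6 → ∀ y : ℝ,
              iteratedDeriv m (fun z => u z t k
                - Pn 5 (1-xs) (fun ν => iteratedDeriv ν (fun z => u z t k) (1-xs)) z) y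
              = iteratedDeriv m (fun z => u z t k) y
                - iteratedDeriv m
                    (Pn 5 (1-xs) (fun ν => iteratedDeriv ν (fun z => u z t k) (1-xs))) y := by
            intro m hm y
            exact iteratedDeriv_sub' ((hu k t).of_le (by exact_mod_cast hm))
              (hP6.of_le (by exact_mod_cast hm)) y
          by_cases hs4 : s ≤ 4
          · have hzero : ∀ m : ℕ, m ≤ 3 → iteratedDeriv m (fun z => u z t k
                - Pn 5 (1-xs) (fun ν => iteratedDeriv ν (fun z => u z t k) (1-xs)) z)
                (1-xs) = 0 := by
              intro m hm
              rw [hsub m (by omega), iteratedDeriv_Pn, Pn_apply_self _ (by omega)]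
              simp
            have hbase : ∀ y ∈ Set.Icc (1-xs) 1, |iteratedDeriv 4 (fun z => u z t k
                - Pn 5 (1-xs) (fun ν => iteratedDeriv ν (fun z => u z t k) (1-xs)) z) y|
                ≤ (6*C₀*(ε^2)⁻¹) * Real.exp (-(c*(1-y))) := by
              intro y hy
              rw [hsub 4 (by norm_num), iteratedDeriv_Pn]
              have hP1 : Pn (5-4) (1-xs)
                  (fun ν => (fun ν' => iteratedDeriv ν' (fun z => u z t k) (1-xs)) (ν + 4)) y
                  = iteratedDeriv 4 (fun z => u z t k) (1-xs) := by
                show Pn 1 _ _ _ = _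
                unfold Pn
                rw [Finset.sum_range_one]
                norm_num
              rw [hP1]
              have hy0 : 0 ≤ y := by linarith [hy.1]
              have hu4y := hbd 4 (by norm_num) k y ⟨hy0, hy.2⟩ t ht
              have hu4b := hcoefb t ht k (1-xs) (by linarith) (by linarith) hBb2 4 (by norm_num)
              have h4e : ε ^ (-((4:ℕ):ℝ)/2) = (ε^2)⁻¹ := by
                rw [show (-((4:ℕ):ℝ)/2) = -((2:ℕ):ℝ) from by push_cast; ring,
                  Real.rpow_neg hε0.le, Real.rpow_natCast]
              rw [h4e] at hu4y
              have hε2pos : (0:ℝ) < ε^2 := by positivity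
              have hinv : (0:ℝ) < (ε^2)⁻¹ := by positivity
              have hεexp_y : ε^2 ≤ Real.exp (-(c*(1-y))) := by
                rw [← hE]
                apply Real.exp_le_exp.2
                nlinarith [mul_nonneg (by linarith [hy.1] : (0:ℝ) ≤ y - (1 - xs)) hc0.le]
              have hBy : Bfun β ε y ≤ 2 * Real.exp (-(c*(1-y))) := by
                rw [hB]
                have : Real.exp (-(c*y)) ≤ Real.exp (-(c*(1-y))) := by
                  apply Real.exp_le_exp.2
                  nlinarith [mul_nonneg (by linarith [hy.1] : (0:ℝ) ≤ 2*y - 1) hc0.le]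
                linarith
              have h1y : 1 ≤ (ε^2)⁻¹ * Real.exp (-(c*(1-y))) := by
                have h := mul_le_mul_of_nonneg_left hεexp_y hinv.le
                rwa [inv_mul_cancel₀ (ne_of_gt hε2pos)] at h
              have h2y : (ε^2)⁻¹ * Bfun β ε y ≤ (ε^2)⁻¹ * (2*Real.exp (-(c*(1-y)))) :=
                mul_le_mul_of_nonneg_left hBy hinv.le
              have htri : |iteratedDeriv 4 (fun z => u z t k) y
                  - iteratedDeriv 4 (fun z => u z t k) (1-xs)|
                  ≤ |iteratedDeriv 4 (fun z => u z t k) y|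
                    + |iteratedDeriv 4 (fun z => u z t k) (1-xs)| := abs_sub _ _
              nlinarith [hu4y, hu4b, htri, mul_le_mul_of_nonneg_left h2y hC₀.le,
                mul_le_mul_of_nonneg_left h1y hC₀.le]
            have hiter := layer_iter_inc _ hf6 c (6*C₀*(ε^2)⁻¹) (1-xs) hc0 (by positivity)
              (by linarith) hzero hbase
            have hfinal := hiter (4-s) (by omega) x ⟨hxgt.le, hx1⟩
            rw [show 4-(4-s) = s from by omega] at hfinal
            refine hfinal.trans ?_
            have h1c : (1:ℝ)/c = Real.sqrt ε * (Real.sqrt β)⁻¹ := by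
              calc (1:ℝ)/c = (Real.sqrt β / Real.sqrt ε)⁻¹ := by
                    rw [hc_def, Real.sqrt_div hβ0.le, one_div]
                _ = Real.sqrt ε / Real.sqrt β := inv_div _ _
                _ = Real.sqrt ε * (Real.sqrt β)⁻¹ := div_eq_mul_inv _ _
            have hconst : (6*C₀*(ε^2)⁻¹) * ((1:ℝ)/c)^(4-s)
                = (6*C₀*((Real.sqrt β)⁻¹)^(4-s)) * (Real.sqrt ε^(4-s)/ε^2) := by
              rw [h1c]
              field_simp
              ring
            rw [hconst, sqrt_pow_div_eq ε hε0 s hs4]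
            have hr := inv_sqrt_pow_le β hβ0 (4-s) (by omega)
            have e1 : Real.exp (-(c*(1-x))) ≤ Bfun β ε x := hBright x
            have hrpow0 : (0:ℝ) ≤ ((Real.sqrt β)⁻¹)^(4-s) :=
              pow_nonneg (inv_nonneg.2 (Real.sqrt_nonneg β)) _
            apply mul_le_mul (mul_le_mul_of_nonneg_right
              (by nlinarith [sq_nonneg (1+1/β)]) hrpnn) e1 (Real.exp_pos _).le
              (mul_nonneg hCpos.le hrpnn)
          · push_neg at hs4
            rw [hsub s hs x, iteratedDeriv_Pn, show 5 - s = 0 from by omega]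
            have hP0 : Pn 0 (1-xs)
                (fun ν => (fun ν' => iteratedDeriv ν' (fun z => u z t k) (1-xs)) (ν + s)) x
                = 0 := by
              unfold Pn; simp
            rw [hP0, sub_zero]
            have husx := hbd s (by omega) k x ⟨hx0, hx1⟩ t ht
            have hge : ε^2 ≤ Bfun β ε x := by
              refine le_trans ?_ (hBright x)
              rw [← hE]
              apply Real.exp_le_exp.2
              nlinarith [mul_nonneg (by linarith : (0:ℝ) ≤ x - (1 - xs)) hc0.le]
            have h1 := one_le_eps_term ε hε0 hε1 s (by omega) _ hge
            refine husx.trans ?_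
            have hG0 : (0:ℝ) ≤ ε ^ (-(s:ℝ)/2) * Bfun β ε x := le_trans zero_le_one h1
            nlinarith [mul_nonneg (mul_nonneg hC₀.le (sub_nonneg.2 hq)) hG0,
              mul_nonneg hC₀.le (sub_nonneg.2 h1)]
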